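/- Let q = r^f be a prime power and let AΓL_1(q) denote the group of all permutations of F_q of the form x ↦ a·σ(x) + b with a ∈ F_q^×, b ∈ F_q, and σ an automorphism of the field F_q. Let X ≤ AΓL_1(q) be a subgroup that is (2+1/2)-transitive on F_q (2-transitive, with all orbits of a 2-point stabilizer on the remaining points of equal size). Then either X is sharply 2-transitive on F_q, or q = 2^p with p prime and X = AΓL_1(2^p). -/

import Mathlib

open Module Polynomial

section Aux

variable {K : Type} [Field K]

/-- A semilinear permutation fixing `0` and `1` acts as its automorphism part. -/
private lemma stab_form (x : Equiv.Perm K) (a : Kˣ) (b : K) (σ : K ≃+* K)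
    (hf : ∀ v, x v = a * σ v + b) (h0 : x 0 = 0) (h1 : x 1 = 1) : ∀ v, x v = σ v := by
  have hb : b = 0 := by
    have := hf 0
    rw [h0, map_zero, mul_zero, zero_add] at this
    exact this.symm
  have ha : (a : K) = 1 := by
    have := hf 1
    rw [h1, map_one, mul_one, hb, add_zero] at this
    exact this.symm
  intro v
  rw [hf v, ha, hb, one_mul, add_zero]

private lemma ringEquiv_toEquiv_inj : Function.Injective (fun σ : K ≃+* K => σ.toEquiv) := by
  intro σ τ h
  ext v
  exact congrFun (congrArg (fun e : Equiv K K => (e : K → K)) h) v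

end Aux

set_option synthInstance.maxHeartbeats 1000000 in
set_option maxHeartbeats 2000000 in
/-- **The `1`-dimensional affine case (Liebeck–Praeger–Saxl, proof of Prop. 4).** Let
`X ≤ AΓL₁(q)` be `(2+1/2)`-transitive on `𝔽_q`. Then either `X` is sharply `2`-transitive,
or `q = 2^p` with `p` prime and `X = AΓL₁(2^p)`. -/
theorem agammal1_twoPlusHalf_transitive
    (K : Type) [Field K] [Fintype K]
    (X : Subgroup (Equiv.Perm K))
    -- `X ≤ AΓL₁(q)`: every element of `X` has the form `v ↦ a·σ(v) + b`,
    (hX : ∀ x ∈ X, ∃ (a : Kˣ) (b : K) (σ : K ≃+* K), ∀ v : K, x v = a * σ v + b)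
    -- `X` is `2`-transitive,
    (h2trans : ∀ a b c d : K, a ≠ b → c ≠ d → ∃ x ∈ X, x a = c ∧ x b = d)
    -- and all orbits of a `2`-point stabilizer on the remaining points have equal size:
    (horb : ∀ α β a b : K, α ≠ β → a ≠ α → a ≠ β → b ≠ α → b ≠ β →
      Nat.card {y : K | ∃ x ∈ X, x α = α ∧ x β = β ∧ y = x a} =
      Nat.card {y : K | ∃ x ∈ X, x α = α ∧ x β = β ∧ y = x b}) :
    -- either `X` is sharply `2`-transitive,
    (∀ x ∈ X, ∀ α β : K, α ≠ β → x α = α → x β = β → x = 1) ∨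
    -- or `q = 2^p` with `p` prime and `X` is all of `AΓL₁(2^p)`:
    (∃ p : ℕ, p.Prime ∧ Nat.card K = 2 ^ p ∧
      ∀ x : Equiv.Perm K, x ∈ X ↔
        ∃ (a : Kˣ) (b : K) (σ : K ≃+* K), ∀ v : K, x v = a * σ v + b) := by
  classical
  by_cases hP : ∀ x ∈ X, x 0 = 0 → x 1 = 1 → x = 1
  · -- sharply 2-transitive
    left
    intro x hx α β hαβ hα hβ
    obtain ⟨g, hgX, hg0, hg1⟩ := h2trans 0 1 α β zero_ne_one hαβ
    have hyX : g⁻¹ * x * g ∈ X := X.mul_mem (X.mul_mem (X.inv_mem hgX) hx) hgX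
    have hy0 : (g⁻¹ * x * g) 0 = 0 := by
      simp only [Equiv.Perm.mul_apply, hg0, hα]
      rw [← hg0, Equiv.Perm.inv_def, Equiv.symm_apply_apply]
    have hy1 : (g⁻¹ * x * g) 1 = 1 := by
      simp only [Equiv.Perm.mul_apply, hg1, hβ]
      rw [← hg1, Equiv.Perm.inv_def, Equiv.symm_apply_apply]
    have h1 := hP _ hyX hy0 hy1
    have : x = g * (g⁻¹ * x * g) * g⁻¹ := by group
    rw [h1] at this
    rw [this]; group
  · -- the AΓL₁(2^p) case
    right
    push_neg at hP
    obtain ⟨x₀, hx₀X, hx₀0, hx₀1, hx₀ne⟩ := hP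
    obtain ⟨c, hc⟩ : ∃ c, x₀ c ≠ c := by
      by_contra h
      push_neg at h
      exact hx₀ne (Equiv.ext h)
    have hc0 : c ≠ 0 := fun h => hc (by rw [h, hx₀0])
    have hc1 : c ≠ 1 := fun h => hc (by rw [h, hx₀1])
    -- card of orbit of `c` under the stabilizer of (0,1) is at least 2
    have hOc : 1 < ({y : K | ∃ x ∈ X, x 0 = 0 ∧ x 1 = 1 ∧ y = x c}).ncard := by
      rw [Set.one_lt_ncard_iff (Set.toFinite _)]
      refine ⟨x₀ c, c, ⟨x₀, hx₀X, hx₀0, hx₀1, rfl⟩, ⟨1, X.one_mem, rfl, rfl, rfl⟩, hc⟩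
    -- every point outside {0,1} is moved by some stabilizer element
    have hmove : ∀ a : K, a ≠ 0 → a ≠ 1 → ∃ x ∈ X, x 0 = 0 ∧ x 1 = 1 ∧ x a ≠ a := by
      intro a ha0 ha1
      by_contra h
      push_neg at h
      have heq : {y : K | ∃ x ∈ X, x 0 = 0 ∧ x 1 = 1 ∧ y = x a} = {a} := by
        ext y
        constructor
        · rintro ⟨x, hx, h0, h1, rfl⟩
          exact (h x hx h0 h1)
        · rintro rfl
          exact ⟨1, X.one_mem, rfl, rfl, rfl⟩
      have hcards := horb 0 1 a c zero_ne_one ha0 ha1 hc0 hc1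
      rw [Nat.card_coe_set_eq, Nat.card_coe_set_eq, heq, Set.ncard_singleton] at hcards
      omega
    -- the subgroup of ring automorphisms whose permutation lies in X
    let Φ : (K ≃+* K) →* Equiv.Perm K :=
      { toFun := fun σ => σ.toEquiv
        map_one' := rfl
        map_mul' := fun σ τ => rfl }
    let H : Subgroup (K ≃+* K) := X.comap Φ
    -- stabilizer elements are ring automorphisms in H
    have stabH : ∀ x ∈ X, x 0 = 0 → x 1 = 1 → ∃ σ : K ≃+* K, σ ∈ H ∧ ∀ v, x v = σ v := by
      intro x hx h0 h1
      obtain ⟨a, b, σ, hf⟩ := hX x hx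
      have hfv := stab_form x a b σ hf h0 h1
      refine ⟨σ, ?_, hfv⟩
      have hσx : σ.toEquiv = x := Equiv.ext fun v => (hfv v).symm
      show Φ σ ∈ X
      show σ.toEquiv ∈ X
      rw [hσx]; exact hx
    haveI : Finite (K ≃+* K) := Finite.of_injective _ ringEquiv_toEquiv_inj
    haveI : Fintype (K ≃+* K) := Fintype.ofFinite _
    haveI : Fintype H := Fintype.ofFinite _
    haveI : FaithfulSMul H K :=
      ⟨fun {σ τ} h => Subtype.ext (RingEquiv.ext fun v => h v)⟩
    -- the fixed field of H is {0, 1}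
    have hF' : ∀ u : K, u ∈ FixedPoints.subfield H K ↔ u = 0 ∨ u = 1 := by
      intro u
      constructor
      · intro hu
        by_contra h
        push_neg at h
        obtain ⟨x, hxX, h0, h1, hne⟩ := hmove u h.1 h.2
        obtain ⟨σ, hσH, hσv⟩ := stabH x hxX h0 h1
        have hfix : (⟨σ, hσH⟩ : H) • u = u := hu ⟨σ, hσH⟩
        exact hne (by rw [hσv u]; exact hfix)
      · rintro (rfl | rfl) <;> intro σ
        · exact smul_zero _
        · exact smul_one _
    -- Artin: [K : K^H] = |H|
    have hArtin : finrank (FixedPoints.subfield H K) K = Fintype.card H :=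
      FixedPoints.finrank_eq_card H K
    haveI : Fintype (FixedPoints.subfield H K) := Fintype.ofFinite _
    have hcardF' : Fintype.card (FixedPoints.subfield H K) = 2 := by
      rw [← Nat.card_eq_fintype_card]
      have hset : ((FixedPoints.subfield H K : Subfield K) : Set K) = {0, 1} := by
        ext u
        simpa [Set.mem_insert_iff] using hF' u
      have : Nat.card (FixedPoints.subfield H K) =
          (((FixedPoints.subfield H K : Subfield K) : Set K)).ncard :=
        Nat.card_coe_set_eq _
      rw [this, hset, Set.ncard_pair (zero_ne_one (α := K))]
    have hcardK : Fintype.card K = 2 ^ Fintype.card H := by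
      rw [← hArtin, ← hcardF']
      exact card_eq_pow_finrank
    -- |H| ≥ 2
    obtain ⟨σ₀, hσ₀H, hσ₀v⟩ := stabH x₀ hx₀X hx₀0 hx₀1
    have hσ₀ne : σ₀ ≠ 1 := by
      intro h
      apply hc
      rw [hσ₀v c, h]
      rfl
    haveI : Nontrivial H := ⟨⟨⟨σ₀, hσ₀H⟩, 1, by simpa [Subtype.ext_iff] using hσ₀ne⟩⟩
    have hf2 : 2 ≤ Fintype.card H := Fintype.one_lt_card
    set f := Fintype.card H with hfdef
    -- a generator of Kˣ
    obtain ⟨ζ, hζ⟩ := IsCyclic.exists_generator (α := Kˣ)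
    have hζ0 : (ζ : K) ≠ 0 := Units.ne_zero ζ
    have hζ1 : (ζ : K) ≠ 1 := by
      intro h
      apply hc1
      obtain ⟨u, rfl⟩ := isUnit_iff_ne_zero.mpr hc0
      obtain ⟨n, hn⟩ := Subgroup.mem_zpowers_iff.mp (hζ u)
      rw [← hn]
      have hζ1' : ζ = 1 := Units.ext h
      rw [hζ1']
      simp
    -- an automorphism fixing ζ is the identity
    have hgen : ∀ ρ : K ≃+* K, ρ (ζ : K) = ζ → ∀ v : K, ρ v = v := by
      intro ρ hρ v
      rcases eq_or_ne v 0 with rfl | hv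
      · exact map_zero ρ
      · obtain ⟨u, rfl⟩ := isUnit_iff_ne_zero.mpr hv
        obtain ⟨n, hn⟩ := Subgroup.mem_zpowers_iff.mp (hζ u)
        rw [← hn, Units.val_zpow_eq_zpow_val, map_zpow₀, hρ]
    -- |H| ≤ |orbit of ζ|
    have hinj : Function.Injective (fun σ : H => (σ : K ≃+* K) (ζ : K)) := by
      intro σ τ h
      have key : ∀ v : K, (τ : K ≃+* K).symm ((σ : K ≃+* K) v) = v := by
        apply hgen ((σ : K ≃+* K).trans (τ : K ≃+* K).symm)
        show (τ : K ≃+* K).symm ((σ : K ≃+* K) (ζ : K)) = (ζ : K)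
        rw [show (σ : K ≃+* K) (ζ : K) = (τ : K ≃+* K) (ζ : K) from h]
        exact (τ : K ≃+* K).symm_apply_apply _
      apply Subtype.ext
      ext v
      have := key v
      have := congrArg (τ : K ≃+* K) this
      rwa [RingEquiv.apply_symm_apply] at this
    have hflece : f ≤ ({y : K | ∃ x ∈ X, x 0 = 0 ∧ x 1 = 1 ∧ y = x (ζ : K)}).ncard := by
      have hsub : Set.range (fun σ : H => (σ : K ≃+* K) (ζ : K)) ⊆
          {y : K | ∃ x ∈ X, x 0 = 0 ∧ x 1 = 1 ∧ y = x (ζ : K)} := by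
        rintro y ⟨σ, rfl⟩
        refine ⟨(σ : K ≃+* K).toEquiv, σ.2, ?_, ?_, rfl⟩
        · exact map_zero (σ : K ≃+* K)
        · exact map_one (σ : K ≃+* K)
      calc f = Nat.card H := Nat.card_eq_fintype_card.symm
        _ = Nat.card (Set.range (fun σ : H => (σ : K ≃+* K) (ζ : K))) :=
            Nat.card_congr (Equiv.ofInjective _ hinj)
        _ = (Set.range (fun σ : H => (σ : K ≃+* K) (ζ : K))).ncard :=
            Nat.card_coe_set_eq _
        _ ≤ _ := Set.ncard_le_ncard hsub (Set.toFinite _)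
    -- characteristic 2
    have h2zero : (1 + 1 : K) = 0 := by
      have hmem : (1 + 1 : K) ∈ FixedPoints.subfield H K := by
        intro σ
        show σ • (1 + 1 : K) = 1 + 1
        rw [smul_add, smul_one]
      rcases (hF' _).1 hmem with h | h
      · exact h
      · exact absurd (by linear_combination h : (1 : K) = 0) one_ne_zero
    have hchar2 : ringChar K = 2 := by
      have hdvd2 : ringChar K ∣ 2 := ringChar.dvd (by push_cast; linear_combination h2zero)
      rcases (Nat.dvd_prime Nat.prime_two).mp hdvd2 with h | h
      · exact absurd h (CharP.ringChar_ne_one)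
      · exact h
    haveI : CharP K 2 := hchar2 ▸ ringChar.charP K
    -- the prime divisor ℓ of f
    set ℓ := f.minFac with hℓdef
    have hℓp : ℓ.Prime := Nat.minFac_prime (by omega)
    have hℓdvd : ℓ ∣ f := Nat.minFac_dvd f
    have hℓle : ℓ ≤ f := Nat.le_of_dvd (by omega) hℓdvd
    have hℓ2 : 2 ≤ ℓ := hℓp.two_le
    have h4ℓ : 4 ≤ 2 ^ ℓ := by
      calc (4 : ℕ) = 2 ^ 2 := by norm_num
        _ ≤ 2 ^ ℓ := Nat.pow_le_pow_right (by norm_num) hℓ2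
    have h4f : 4 ≤ 2 ^ f := by
      calc (4 : ℕ) = 2 ^ 2 := by norm_num
        _ ≤ 2 ^ f := Nat.pow_le_pow_right (by norm_num) hf2
    have hdvdff : 2 ^ ℓ - 1 ∣ 2 ^ f - 1 := by
      have h := Nat.sub_dvd_pow_sub_pow (2 ^ ℓ) 1 (f / ℓ)
      rwa [one_pow, ← pow_mul, Nat.mul_div_cancel' hℓdvd] at h
    have horder : orderOf (ζ : K) = 2 ^ f - 1 := by
      rw [orderOf_units, orderOf_eq_card_of_forall_mem_zpowers hζ,
        Nat.card_eq_fintype_card, Fintype.card_units, hcardK]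
    set e := (2 ^ f - 1) / (2 ^ ℓ - 1) with hedef
    set a := (ζ : K) ^ e with hadef
    have hepos : 0 < e :=
      Nat.div_pos (Nat.sub_le_sub_right (Nat.pow_le_pow_right (by norm_num) hℓle) 1) (by omega)
    have helt : e < 2 ^ f - 1 := Nat.div_lt_self (by omega) (by omega)
    have hapow : a ^ (2 ^ ℓ) = a := by
      have h1 : a ^ (2 ^ ℓ - 1) = 1 := by
        rw [hadef, ← pow_mul, Nat.div_mul_cancel hdvdff, ← horder]
        exact pow_orderOf_eq_one _
      calc a ^ (2 ^ ℓ) = a ^ (2 ^ ℓ - 1 + 1) := by congr 1; omega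
        _ = a ^ (2 ^ ℓ - 1) * a := pow_succ _ _
        _ = a := by rw [h1, one_mul]
    have ha0 : a ≠ 0 := pow_ne_zero _ hζ0
    have ha1 : a ≠ 1 := by
      intro h
      have hdvd := orderOf_dvd_of_pow_eq_one (by rw [← hadef]; exact h)
      rw [horder] at hdvd
      have := Nat.le_of_dvd hepos hdvd
      omega
    -- the subfield of elements with y^(2^ℓ) = y
    haveI : ExpChar K 2 := ExpChar.prime Nat.prime_two
    set φ : K →+* K := frobenius K 2 with hφdef
    set L' : Subfield K := RingHom.eqLocusField (φ ^ ℓ) (RingHom.id K) with hL'def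
    have hmemL' : ∀ y : K, y ∈ L' ↔ y ^ 2 ^ ℓ = y := by
      intro y
      show (φ ^ ℓ) y = RingHom.id K y ↔ _
      rw [RingHom.coe_pow, hφdef, iterate_frobenius, RingHom.id_apply]
    set F' : Subfield K := FixedPoints.subfield H K with hF'def
    -- T : the subfield L' as an intermediate field over F'
    have halgmem : ∀ u : F', algebraMap F' K u ∈ L' := by
      intro u
      rw [hmemL']
      rcases (hF' u).1 u.2 with h | h
      · show (u : K) ^ 2 ^ ℓ = (u : K)
        rw [h, zero_pow (by positivity)]
      · show (u : K) ^ 2 ^ ℓ = (u : K)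
        rw [h, one_pow]
    set T : IntermediateField F' K := Subfield.toIntermediateField L' halgmem with hTdef
    haveI : Module.Finite F' K := Module.Finite.of_restrictScalars_finite F' F' K
    have hint : IsIntegral F' a := IsIntegral.of_finite F' a
    set d := (minpoly F' a).natDegree with hddef
    have hd : finrank F' (IntermediateField.adjoin F' {a}) = d :=
      IntermediateField.adjoin.finrank hint
    -- the orbit of a is contained in the roots of the minimal polynomial of a over F'
    have hOa : ({y : K | ∃ x ∈ X, x 0 = 0 ∧ x 1 = 1 ∧ y = x a}).ncard ≤ d := by
      set P := minpoly F' a with hPdef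
      have hP0 : P ≠ 0 := minpoly.ne_zero hint
      set Pm := P.map (algebraMap F' K) with hPmdef
      have hPm0 : Pm ≠ 0 := Polynomial.map_ne_zero hP0
      have hsub : {y : K | ∃ x ∈ X, x 0 = 0 ∧ x 1 = 1 ∧ y = x a} ⊆ ↑Pm.roots.toFinset := by
        rintro y ⟨x, hx, h0, h1, rfl⟩
        obtain ⟨σ, hσH, hσv⟩ := stabH x hx h0 h1
        rw [hσv a]
        have hfix : ∀ r : F', σ (r : K) = r := fun r => r.2 ⟨σ, hσH⟩
        let σalg : K →ₐ[F'] K :=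
          { toRingHom := (σ : K →+* K)
            commutes' := fun r => hfix r }
        have haev : Polynomial.aeval (σ a) P = 0 := by
          have h := Polynomial.aeval_algHom_apply σalg a P
          rwa [hPdef, minpoly.aeval, map_zero] at h
        simp only [Finset.coe_sort_coe, Multiset.mem_toFinset, Finset.mem_coe]
        rw [Polynomial.mem_roots hPm0, Polynomial.IsRoot, hPmdef, Polynomial.eval_map,
          ← Polynomial.aeval_def]
        exact haev
      calc ({y : K | ∃ x ∈ X, x 0 = 0 ∧ x 1 = 1 ∧ y = x a}).ncard
          ≤ (↑Pm.roots.toFinset : Set K).ncard := Set.ncard_le_ncard hsub (Set.toFinite _)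
        _ = Pm.roots.toFinset.card := Set.ncard_coe_finset _
        _ ≤ Multiset.card Pm.roots := Multiset.toFinset_card_le _
        _ ≤ Pm.natDegree := Polynomial.card_roots' Pm
        _ = d := by rw [hPmdef, Polynomial.natDegree_map]
    -- d ≤ ℓ
    have hdℓ : d ≤ ℓ := by
      haveI : Fintype (IntermediateField.adjoin F' {a}) := Fintype.ofFinite _
      have hcardF'nat : Nat.card F' = 2 := by
        have hset : ((F' : Subfield K) : Set K) = {0, 1} := by
          ext u
          simpa [Set.mem_insert_iff] using hF' u
        calc Nat.card F' = ((F' : Subfield K) : Set K).ncard := Nat.card_coe_set_eq _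
          _ = 2 := by rw [hset]; exact Set.ncard_pair (zero_ne_one (α := K))
      have hcard_adj : Fintype.card (IntermediateField.adjoin F' {a}) = 2 ^ d := by
        rw [card_eq_pow_finrank (K := F') (V := IntermediateField.adjoin F' {a}), hd,
          Fintype.card_eq_nat_card, hcardF'nat]
      have hadjT : IntermediateField.adjoin F' {a} ≤ T := by
        rw [IntermediateField.adjoin_le_iff]
        intro y hy
        rcases hy with rfl
        show a ∈ L'
        rw [hmemL']
        exact hapow
      -- elements of T are roots of X^(2^ℓ) - X
      set Q : Polynomial K := Polynomial.X ^ 2 ^ ℓ - Polynomial.X with hQdef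
      have hQdeg : Q.natDegree = 2 ^ ℓ := by
        rw [hQdef, Polynomial.natDegree_sub_eq_left_of_natDegree_lt, Polynomial.natDegree_X_pow]
        rw [Polynomial.natDegree_X, Polynomial.natDegree_X_pow]
        omega
      have hQ0 : Q ≠ 0 := fun h => by
        rw [h, Polynomial.natDegree_zero] at hQdeg
        omega
      have hTsub : (T : Set K) ⊆ ↑Q.roots.toFinset := by
        intro y hy
        have hyL : y ∈ L' := hy
        rw [hmemL'] at hyL
        simp only [Finset.coe_sort_coe, Multiset.mem_toFinset, Finset.mem_coe]
        rw [Polynomial.mem_roots hQ0, Polynomial.IsRoot, hQdef]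
        simp only [Polynomial.eval_sub, Polynomial.eval_pow, Polynomial.eval_X]
        rw [hyL, sub_self]
      have hTcard : (T : Set K).ncard ≤ 2 ^ ℓ := by
        calc (T : Set K).ncard ≤ (↑Q.roots.toFinset : Set K).ncard :=
              Set.ncard_le_ncard hTsub (Set.toFinite _)
          _ = Q.roots.toFinset.card := Set.ncard_coe_finset _
          _ ≤ Multiset.card Q.roots := Multiset.toFinset_card_le _
          _ ≤ Q.natDegree := Polynomial.card_roots' Q
          _ = 2 ^ ℓ := hQdeg
      have hsub2 : ((IntermediateField.adjoin F' {a} : IntermediateField F' K) : Set K)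
          ⊆ (T : Set K) := fun y hy => hadjT hy
      have h2d : 2 ^ d ≤ 2 ^ ℓ := by
        calc 2 ^ d = Fintype.card (IntermediateField.adjoin F' {a}) := hcard_adj.symm
          _ = Nat.card (IntermediateField.adjoin F' {a}) := Nat.card_eq_fintype_card.symm
          _ = ((IntermediateField.adjoin F' {a} : IntermediateField F' K) : Set K).ncard :=
              Nat.card_coe_set_eq _
          _ ≤ (T : Set K).ncard := Set.ncard_le_ncard hsub2 (Set.toFinite _)
          _ ≤ 2 ^ ℓ := hTcard
      exact (Nat.pow_le_pow_iff_right (by norm_num)).mp h2d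
    -- conclude f = ℓ is prime
    have hfℓ : f = ℓ := by
      have h1 := horb 0 1 (ζ : K) a zero_ne_one hζ0 hζ1 ha0 ha1
      rw [Nat.card_coe_set_eq, Nat.card_coe_set_eq] at h1
      omega
    -- the fixed field of the full automorphism group is also F'
    have hArtin2 : finrank (FixedPoints.subfield (K ≃+* K) K) K = Fintype.card (K ≃+* K) :=
      FixedPoints.finrank_eq_card (K ≃+* K) K
    have hsub_eq : FixedPoints.subfield (K ≃+* K) K = FixedPoints.subfield H K := by
      apply SetLike.ext
      intro u
      constructor
      · intro hu
        intro σ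
        exact hu (σ : K ≃+* K)
      · intro hu
        rcases (hF' u).1 hu with rfl | rfl
        · intro g
          exact smul_zero g
        · intro g
          exact smul_one g
    have hcard_auts : Fintype.card (K ≃+* K) = f := by
      rw [← hArtin2, hsub_eq]
      exact hArtin
    have hHtop : H = ⊤ := by
      apply Subgroup.eq_top_of_card_eq
      rw [Nat.card_eq_fintype_card, Nat.card_eq_fintype_card, hcard_auts]
    -- conclusion
    refine ⟨f, by rw [hfℓ]; exact hℓp, by rw [Nat.card_eq_fintype_card, hcardK], ?_⟩
    intro x
    constructor
    · exact hX x
    · rintro ⟨a', b', σ', hform⟩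
      have hb' : x 0 = b' := by simpa using hform 0
      have ha'b' : x 1 = (a' : K) + b' := by simpa using hform 1
      have hne : b' ≠ (a' : K) + b' := fun h => a'.ne_zero (right_eq_add.mp h)
      obtain ⟨g, hgX, hg0, hg1⟩ := h2trans 0 1 b' ((a' : K) + b') zero_ne_one hne
      obtain ⟨a₁, b₁, σ₁, hf₁⟩ := hX g⁻¹ (X.inv_mem hgX)
      set A : Kˣ := a₁ * Units.map (σ₁ : K →+* K).toMonoidHom a' with hAdef
      set B : K := (a₁ : K) * σ₁ b' + b₁ with hBdef
      have hyform : ∀ v, (g⁻¹ * x) v = A * (σ'.trans σ₁) v + B := by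
        intro v
        rw [Equiv.Perm.mul_apply, hform v, hf₁, map_add, map_mul]
        have hAv : (A : K) = (a₁ : K) * σ₁ (a' : K) := by
          rw [hAdef, Units.val_mul]
          congr 1
        rw [hAv, hBdef, RingEquiv.trans_apply]
        ring
      have hy0 : (g⁻¹ * x) 0 = 0 := by
        rw [Equiv.Perm.mul_apply, hb', ← hg0, Equiv.Perm.inv_def, Equiv.symm_apply_apply]
      have hy1 : (g⁻¹ * x) 1 = 1 := by
        rw [Equiv.Perm.mul_apply, ha'b', ← hg1, Equiv.Perm.inv_def, Equiv.symm_apply_apply]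
      have hyv := stab_form (g⁻¹ * x) A B (σ'.trans σ₁) hyform hy0 hy1
      have hyX : g⁻¹ * x ∈ X := by
        have hmem : σ'.trans σ₁ ∈ H := by rw [hHtop]; trivial
        have hXmem : Φ (σ'.trans σ₁) ∈ X := hmem
        have heq : (σ'.trans σ₁).toEquiv = g⁻¹ * x := Equiv.ext fun v => (hyv v).symm
        rwa [show Φ (σ'.trans σ₁) = (σ'.trans σ₁).toEquiv from rfl, heq] at hXmem
      have hfin := X.mul_mem hgX hyX
      rwa [mul_inv_cancel_left] at hfin
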